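/- Let A be an Artin algebra with Jacobson radical J, and let P_• = (P_i, f_i : P_i → P_{i−1})_{i∈ℤ} be a minimal complex of finitely generated projective left A-modules (minimal meaning Im f_i ⊆ J·P_{i−1} for all i) such that H_i(P_•) = 0 for all i ≠ 0, −1 and the A-dual complex P_•* = Hom_A(P_•, A) is acyclic. Then M := Coker f₁ is a reduced bi-semi-Gorenstein-projective module, i.e. both M and the right A-module M* are semi-Gorenstein-projective and M has no nonzero projective direct summand; moreover M* ≅ Coker(f_{−1}* : P_{−1}* → P_{−2}*) and M** ≅ Ker f_{−1}. -/

import Mathlib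

universe u

open Function

section Preamble

variable (A : Type u) [Ring A]

/-- The `A`-dual map `Hom(N,A) → Hom(M,A)` of `f : M →ₗ[A] N`; it is linear
for the right `A`-module (= left `Aᵐᵒᵖ`-module) structures on the duals. -/
def dualMapRight {M N : Type u} [AddCommGroup M] [Module A M] [AddCommGroup N] [Module A N]
    (f : M →ₗ[A] N) : (N →ₗ[A] A) →ₗ[Aᵐᵒᵖ] (M →ₗ[A] A) where
  toFun g := g.comp f
  map_add' g₁ g₂ := by ext m; rfl
  map_smul' a g := by ext m; rfl

/-- The evaluation map `φ_M : M → M**`. -/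
def evalBidual (M : Type u) [AddCommGroup M] [Module A M] :
    M →ₗ[A] ((M →ₗ[A] A) →ₗ[Aᵐᵒᵖ] A) where
  toFun m :=
    { toFun := fun f => f m
      map_add' := fun f g => rfl
      map_smul' := fun a f => rfl }
  map_add' m₁ m₂ := by ext f; exact f.map_add m₁ m₂
  map_smul' a m := by ext f; exact f.map_smul a m

/-- `M` is torsionless if `φ_M` is injective. -/
def IsTorsionlessMod (M : Type u) [AddCommGroup M] [Module A M] : Prop :=
  Function.Injective (evalBidual A M)

/-- `M` is reflexive if `φ_M` is bijective. -/
def IsReflexiveMod (M : Type u) [AddCommGroup M] [Module A M] : Prop :=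
  Function.Bijective (evalBidual A M)

/-- A resolution of `M` by finitely generated projective modules. -/
structure ProjRes (M : Type u) [AddCommGroup M] [Module A M] where
  P : ℕ → Type u
  [acg : ∀ n, AddCommGroup (P n)]
  [mod : ∀ n, Module A (P n)]
  proj : ∀ n, Module.Projective A (P n)
  fin : ∀ n, Module.Finite A (P n)
  d : ∀ n, P (n + 1) →ₗ[A] P n
  aug : P 0 →ₗ[A] M
  surj : Function.Surjective aug
  exact0 : LinearMap.range (d 0) = LinearMap.ker aug
  exact : ∀ n, LinearMap.range (d (n + 1)) = LinearMap.ker (d n)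

attribute [instance] ProjRes.acg ProjRes.mod

/-- `Ext^i_A(M, A) = 0` for all `i ≥ 1`:  for every (equivalently, some) projective
resolution of `M`, the `A`-dual complex is exact in all degrees `≥ 1`. -/
def IsSemiGorensteinProj (M : Type u) [AddCommGroup M] [Module A M] : Prop :=
  ∀ R : ProjRes A M, ∀ n : ℕ,
    LinearMap.range (dualMapRight A (R.d n)) = LinearMap.ker (dualMapRight A (R.d (n + 1)))

/-- `Ext^1_A(M, A') = 0` where `A'` is the ring itself (degree-one vanishing only). -/
def ExtOneToRingVanishes (M : Type u) [AddCommGroup M] [Module A M] : Prop :=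
  ∀ R : ProjRes A M,
    LinearMap.range (dualMapRight A (R.d 0)) = LinearMap.ker (dualMapRight A (R.d 1))

/-- `Ext^{m+1}_A(M, N) ≠ 0`, expressed via projective resolutions: there is a cocycle
which is not a coboundary. -/
def ExtNonzero (M : Type u) [AddCommGroup M] [Module A M]
    (N : Type u) [AddCommGroup N] [Module A N] (m : ℕ) : Prop :=
  ∀ R : ProjRes A M, ∃ g : R.P (m + 1) →ₗ[A] N,
    g.comp (R.d (m + 1)) = 0 ∧ ∀ h : R.P m →ₗ[A] N, h.comp (R.d m) ≠ g

/-- A complete resolution: a doubly infinite exact sequence of finitely generated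
projective modules whose `A`-dual complex is also exact. -/
structure CompleteRes where
  P : ℤ → Type u
  [acg : ∀ n, AddCommGroup (P n)]
  [mod : ∀ n, Module A (P n)]
  proj : ∀ n, Module.Projective A (P n)
  fin : ∀ n, Module.Finite A (P n)
  d : ∀ n : ℤ, P n →ₗ[A] P (n + 1)
  exact : ∀ n, LinearMap.range (d n) = LinearMap.ker (d (n + 1))
  dual_exact : ∀ n,
    LinearMap.range (dualMapRight A (d (n + 1))) = LinearMap.ker (dualMapRight A (d n))

attribute [instance] CompleteRes.acg CompleteRes.mod

/-- `M` is Gorenstein-projective: it is the image of a differential in a complete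
resolution. -/
def IsGorensteinProj (M : Type u) [AddCommGroup M] [Module A M] : Prop :=
  ∃ C : CompleteRes A, Nonempty (M ≃ₗ[A] LinearMap.range (C.d 0))

end Preamble

/-- The submodule `J·P` where `J` is the Jacobson radical of `A`. -/
def radSMul (A : Type u) [Ring A] (P : Type u) [AddCommGroup P] [Module A P] :
    Submodule A P :=
  Submodule.span A {x | ∃ a ∈ (⊥ : Ideal A).jacobson, ∃ p : P, a • p = x}

section MyAux1
open MulOpposite LinearMap

variable {A : Type u} [Ring A]

/-- dual basis for a f.g. projective module -/
theorem myDualBasis (P : Type u) [AddCommGroup P] [Module A P] [Module.Finite A P]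
    (hp : Module.Projective A P) :
    ∃ (k : ℕ) (x : Fin k → P) (φ : Fin k → (P →ₗ[A] A)), ∀ p : P, p = ∑ j, φ j p • x j := by
  obtain ⟨k, π, hπ⟩ := Module.Finite.exists_fin' A P
  haveI := hp
  obtain ⟨s, hs⟩ := Module.projective_lifting_property π LinearMap.id hπ
  refine ⟨k, fun j => π (Pi.single j 1), fun j => (LinearMap.proj j).comp s, fun p => ?_⟩
  have h1 : s p = ∑ j, (s p j) • (Pi.single j (1 : A) : Fin k → A) := by
    ext i
    rw [Finset.sum_apply]
    simp [Pi.single_apply, eq_comm]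
  have h2 : π (s p) = p := by
    have := congrArg (fun g => g p) hs
    simpa using this
  have h3 : π (∑ j, s p j • (Pi.single j (1:A) : Fin k → A)) = ∑ j, s p j • π (Pi.single j 1) := by
    rw [map_sum]
    exact Finset.sum_congr rfl fun j _ => by rw [map_smul]
  calc p = π (s p) := h2.symm
    _ = π (∑ j, s p j • (Pi.single j (1:A) : Fin k → A)) := by rw [← h1]
    _ = ∑ j, s p j • π (Pi.single j 1) := h3
    _ = ∑ j, ((LinearMap.proj j).comp s) p • π (Pi.single j 1) := rfl

theorem myEvalInj (P : Type u) [AddCommGroup P] [Module A P] [Module.Finite A P]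
    (hp : Module.Projective A P) (p : P) (h : ∀ g : P →ₗ[A] A, g p = 0) : p = 0 := by
  obtain ⟨k, x, φ, hd⟩ := myDualBasis P hp
  rw [hd p]
  simp [h]

/-- every functional on the dual decomposes via the dual basis -/
theorem myDualDecomp (P : Type u) [AddCommGroup P] [Module A P]
    {k : ℕ} (x : Fin k → P) (φ : Fin k → (P →ₗ[A] A)) (hd : ∀ p : P, p = ∑ j, φ j p • x j)
    (g : P →ₗ[A] A) : g = ∑ j, op (g (x j)) • φ j := by
  ext p
  conv_lhs => rw [hd p]
  rw [map_sum, LinearMap.sum_apply]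
  exact Finset.sum_congr rfl fun j _ => by
    rw [map_smul, LinearMap.smul_apply, op_smul_eq_mul]
    rfl

theorem myEvalSurjA (P : Type u) [AddCommGroup P] [Module A P] [Module.Finite A P]
    (hp : Module.Projective A P) (Φ : (P →ₗ[A] A) →ₗ[Aᵐᵒᵖ] A) :
    ∃ p : P, ∀ g : P →ₗ[A] A, Φ g = g p := by
  obtain ⟨k, x, φ, hd⟩ := myDualBasis P hp
  refine ⟨∑ j, Φ (φ j) • x j, fun g => ?_⟩
  conv_lhs => rw [myDualDecomp P x φ hd g]
  rw [map_sum, map_sum]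
  exact Finset.sum_congr rfl fun j _ => by
    rw [map_smul, op_smul_eq_mul, map_smul]
    rfl

theorem myEvalSurjOp (P : Type u) [AddCommGroup P] [Module A P] [Module.Finite A P]
    (hp : Module.Projective A P) (Ψ : (P →ₗ[A] A) →ₗ[Aᵐᵒᵖ] Aᵐᵒᵖ) :
    ∃ p : P, ∀ g : P →ₗ[A] A, Ψ g = op (g p) := by
  obtain ⟨k, x, φ, hd⟩ := myDualBasis P hp
  refine ⟨∑ j, (Ψ (φ j)).unop • x j, fun g => ?_⟩
  conv_lhs => rw [myDualDecomp P x φ hd g]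
  rw [map_sum, map_sum]
  rw [Finset.op_sum]
  exact Finset.sum_congr rfl fun j _ => by
    rw [map_smul, map_smul, smul_eq_mul, smul_eq_mul, MulOpposite.op_mul, op_unop]

end MyAux1
section MyAux2
open MulOpposite LinearMap

variable {A : Type u} [Ring A]

/-- the `α,β` split of the dual of a f.g. projective module through a free module -/
theorem myDualSplit (P : Type u) [AddCommGroup P] [Module A P] [Module.Finite A P]
    (hp : Module.Projective A P) :
    ∃ (k : ℕ) (α : (Fin k → Aᵐᵒᵖ) →ₗ[Aᵐᵒᵖ] (P →ₗ[A] A)) (β : (P →ₗ[A] A) →ₗ[Aᵐᵒᵖ] (Fin k → Aᵐᵒᵖ)),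
      α ∘ₗ β = LinearMap.id := by
  obtain ⟨k, x, φ, hd⟩ := myDualBasis P hp
  refine ⟨k,
    { toFun := fun v => ∑ j, v j • φ j
      map_add' := fun v w => by
        simp [add_smul, Finset.sum_add_distrib]
      map_smul' := fun a v => by
        simp [Finset.smul_sum, smul_smul] },
    { toFun := fun g => fun j => op (g (x j))
      map_add' := fun g h => by ext j; simp
      map_smul' := fun a g => rfl }, ?_⟩
  · exact LinearMap.ext fun g => (myDualDecomp P x φ hd g).symm

theorem myDualProjective (P : Type u) [AddCommGroup P] [Module A P] [Module.Finite A P]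
    (hp : Module.Projective A P) : Module.Projective Aᵐᵒᵖ (P →ₗ[A] A) := by
  obtain ⟨k, α, β, hαβ⟩ := myDualSplit P hp
  exact Module.Projective.of_split β α hαβ

theorem myDualFinite (P : Type u) [AddCommGroup P] [Module A P] [Module.Finite A P]
    (hp : Module.Projective A P) : Module.Finite Aᵐᵒᵖ (P →ₗ[A] A) := by
  obtain ⟨k, α, β, hαβ⟩ := myDualSplit P hp
  have hs : Function.Surjective α := fun g => ⟨β g, congrArg (fun u => u g) hαβ⟩
  exact Module.Finite.of_surjective α hs

/-- the `op`-twisted evaluation map -/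
def opEval {X : Type u} [AddCommGroup X] [Module A X] (x : X) :
    (X →ₗ[A] A) →ₗ[Aᵐᵒᵖ] Aᵐᵒᵖ where
  toFun g := op (g x)
  map_add' g h := by simp
  map_smul' a g := rfl

end MyAux2
section MyAux3
open LinearMap

variable {A : Type u} [Ring A] {M : Type u} [AddCommGroup M] [Module A M]

theorem dualMapRight_apply' {X Y : Type u} [AddCommGroup X] [Module A X] [AddCommGroup Y]
    [Module A Y] (f : X →ₗ[A] Y) (g : Y →ₗ[A] A) : dualMapRight A f g = g ∘ₗ f := rfl

theorem myLift {Q X Y : Type u} [AddCommGroup Q] [Module A Q] [AddCommGroup X] [Module A X]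
    [AddCommGroup Y] [Module A Y] (hq : Module.Projective A Q)
    (p : X →ₗ[A] Y) (g : Q →ₗ[A] Y) (h : LinearMap.range g ≤ LinearMap.range p) :
    ∃ q : Q →ₗ[A] X, p ∘ₗ q = g := by
  haveI := hq
  obtain ⟨q, hq'⟩ := Module.projective_lifting_property p.rangeRestrict
    (g.codRestrict (LinearMap.range p) fun x => h ⟨x, rfl⟩) p.surjective_rangeRestrict
  refine ⟨q, LinearMap.ext fun x => ?_⟩
  have := congrArg (fun u : Q →ₗ[A] LinearMap.range p => ((u x : LinearMap.range p) : Y)) hq'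
  simpa using this

theorem myCompZero {X Y Z : Type u} [AddCommGroup X] [Module A X] [AddCommGroup Y] [Module A Y]
    [AddCommGroup Z] [Module A Z] (f : X →ₗ[A] Y) (g : Y →ₗ[A] Z)
    (h : LinearMap.range f ≤ LinearMap.ker g) : g ∘ₗ f = 0 :=
  LinearMap.ext fun x => LinearMap.mem_ker.mp (h ⟨x, rfl⟩)

theorem ProjRes.aug_d (R : ProjRes A M) : R.aug ∘ₗ R.d 0 = 0 :=
  myCompZero _ _ (R.exact0.le)

theorem ProjRes.dd (R : ProjRes A M) (n : ℕ) : R.d n ∘ₗ R.d (n+1) = 0 :=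
  myCompZero _ _ ((R.exact n).le)

theorem chain_ex0 (R S : ProjRes A M) : ∃ u0 : R.P 0 →ₗ[A] S.P 0, S.aug ∘ₗ u0 = R.aug := by
  haveI := R.proj 0
  exact Module.projective_lifting_property S.aug R.aug S.surj

theorem chain_ex1 (R S : ProjRes A M) (u0 : R.P 0 →ₗ[A] S.P 0) (h0 : S.aug ∘ₗ u0 = R.aug) :
    ∃ u1 : R.P 1 →ₗ[A] S.P 1, S.d 0 ∘ₗ u1 = u0 ∘ₗ R.d 0 := by
  apply myLift (R.proj 1) (S.d 0)
  rw [S.exact0]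
  rintro _ ⟨x, rfl⟩
  rw [LinearMap.mem_ker]
  show S.aug (u0 (R.d 0 x)) = 0
  have : S.aug (u0 (R.d 0 x)) = R.aug (R.d 0 x) := congrArg (fun u => u (R.d 0 x)) h0
  rw [this]
  exact congrArg (fun u => u x) R.aug_d

theorem chain_exnext (R S : ProjRes A M) (n : ℕ) (u1 : R.P (n+1) →ₗ[A] S.P (n+1))
    (u0 : R.P n →ₗ[A] S.P n) (hcomp : S.d n ∘ₗ u1 = u0 ∘ₗ R.d n) :
    ∃ u2 : R.P (n+2) →ₗ[A] S.P (n+2), S.d (n+1) ∘ₗ u2 = u1 ∘ₗ R.d (n+1) := by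
  apply myLift (R.proj (n+2)) (S.d (n+1))
  rw [S.exact n]
  rintro _ ⟨x, rfl⟩
  rw [LinearMap.mem_ker]
  show S.d n (u1 (R.d (n+1) x)) = 0
  have h1 : S.d n (u1 (R.d (n+1) x)) = u0 (R.d n (R.d (n+1) x)) :=
    congrArg (fun u => u (R.d (n+1) x)) hcomp
  have h2 : R.d n (R.d (n+1) x) = 0 := congrArg (fun u => u x) (R.dd n)
  rw [h1, h2, map_zero]

noncomputable def chainU (R S : ProjRes A M) :
    ∀ n : ℕ, Σ' p : (R.P n →ₗ[A] S.P n) × (R.P (n+1) →ₗ[A] S.P (n+1)),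
      S.d n ∘ₗ p.2 = p.1 ∘ₗ R.d n :=
  Nat.rec
    ⟨(Classical.choose (chain_ex0 R S),
      Classical.choose (chain_ex1 R S _ (Classical.choose_spec (chain_ex0 R S)))),
      Classical.choose_spec (chain_ex1 R S _ (Classical.choose_spec (chain_ex0 R S)))⟩
    (fun n ih => ⟨(ih.1.2, Classical.choose (chain_exnext R S n ih.1.2 ih.1.1 ih.2)),
      Classical.choose_spec (chain_exnext R S n ih.1.2 ih.1.1 ih.2)⟩)

noncomputable def cmap (R S : ProjRes A M) (n : ℕ) : R.P n →ₗ[A] S.P n := (chainU R S n).1.1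

theorem cmap_aug (R S : ProjRes A M) : S.aug ∘ₗ cmap R S 0 = R.aug :=
  Classical.choose_spec (chain_ex0 R S)

theorem cmap_chain (R S : ProjRes A M) (n : ℕ) :
    S.d n ∘ₗ cmap R S (n+1) = cmap R S n ∘ₗ R.d n := (chainU R S n).2

theorem w_aug (R S : ProjRes A M) : R.aug ∘ₗ (cmap S R 0 ∘ₗ cmap R S 0) = R.aug := by
  rw [← LinearMap.comp_assoc, cmap_aug S R, cmap_aug R S]

theorem w_chain (R S : ProjRes A M) (n : ℕ) :
    R.d n ∘ₗ (cmap S R (n+1) ∘ₗ cmap R S (n+1)) =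
      (cmap S R n ∘ₗ cmap R S n) ∘ₗ R.d n := by
  rw [← LinearMap.comp_assoc, cmap_chain S R n, LinearMap.comp_assoc, cmap_chain R S n,
    ← LinearMap.comp_assoc]

theorem hom_ex0 (R S : ProjRes A M) :
    ∃ h0 : R.P 0 →ₗ[A] R.P 1,
      R.d 0 ∘ₗ h0 = (cmap S R 0 ∘ₗ cmap R S 0) - LinearMap.id := by
  apply myLift (R.proj 0) (R.d 0)
  rw [R.exact0]
  rintro _ ⟨x, rfl⟩
  rw [LinearMap.mem_ker]
  show R.aug ((cmap S R 0 ∘ₗ cmap R S 0) x - x) = 0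
  rw [map_sub]
  have : R.aug ((cmap S R 0 ∘ₗ cmap R S 0) x) = R.aug x := congrArg (fun u => u x) (w_aug R S)
  rw [this, sub_self]

theorem hom_exnext (R S : ProjRes A M) (n : ℕ) (hn : R.P n →ₗ[A] R.P (n+1))
    (c : R.P n →ₗ[A] R.P n)
    (heq : R.d n ∘ₗ hn = (cmap S R n ∘ₗ cmap R S n) - LinearMap.id - c)
    (hc : c ∘ₗ R.d n = 0) :
    ∃ h1 : R.P (n+1) →ₗ[A] R.P (n+2),
      R.d (n+1) ∘ₗ h1 = (cmap S R (n+1) ∘ₗ cmap R S (n+1)) - LinearMap.id - (hn ∘ₗ R.d n) := by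
  apply myLift (R.proj (n+1)) (R.d (n+1))
  rw [R.exact n]
  intro y hy
  rw [LinearMap.mem_ker]
  obtain ⟨x, rfl⟩ := hy
  have key : R.d n ∘ₗ ((cmap S R (n+1) ∘ₗ cmap R S (n+1)) - LinearMap.id - (hn ∘ₗ R.d n)) = 0 := by
    rw [LinearMap.comp_sub, LinearMap.comp_sub, w_chain R S n, ← LinearMap.comp_assoc, heq,
      LinearMap.sub_comp, LinearMap.sub_comp, LinearMap.id_comp]
    have : R.d n ∘ₗ LinearMap.id = R.d n := LinearMap.comp_id _
    rw [this, hc, sub_zero]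
    abel
  exact congrArg (fun u => u x) key

noncomputable def homU (R S : ProjRes A M) :
    ∀ n : ℕ, Σ' p : (R.P n →ₗ[A] R.P (n+1)) × (R.P n →ₗ[A] R.P n),
      (R.d n ∘ₗ p.1 = (cmap S R n ∘ₗ cmap R S n) - LinearMap.id - p.2) ∧ p.2 ∘ₗ R.d n = 0 :=
  Nat.rec
    ⟨(Classical.choose (hom_ex0 R S), 0),
      ⟨by rw [Classical.choose_spec (hom_ex0 R S), sub_zero], LinearMap.zero_comp _⟩⟩
    (fun n ih =>
      ⟨(Classical.choose (hom_exnext R S n ih.1.1 ih.1.2 ih.2.1 ih.2.2), ih.1.1 ∘ₗ R.d n),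
        ⟨Classical.choose_spec (hom_exnext R S n ih.1.1 ih.1.2 ih.2.1 ih.2.2), by
          rw [LinearMap.comp_assoc, R.dd n, LinearMap.comp_zero]⟩⟩)

noncomputable def hmap (R S : ProjRes A M) (n : ℕ) : R.P n →ₗ[A] R.P (n+1) := (homU R S n).1.1

theorem hmap_rel (R S : ProjRes A M) (n : ℕ) :
    R.d (n+1) ∘ₗ hmap R S (n+1) =
      (cmap S R (n+1) ∘ₗ cmap R S (n+1)) - LinearMap.id - (hmap R S n ∘ₗ R.d n) :=
  (homU R S (n+1)).2.1

theorem myTransfer (S R : ProjRes A M)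
    (hS : ∀ n, LinearMap.range (dualMapRight A (S.d n)) = LinearMap.ker (dualMapRight A (S.d (n+1))))
    (n : ℕ) :
    LinearMap.range (dualMapRight A (R.d n)) = LinearMap.ker (dualMapRight A (R.d (n+1))) := by
  apply le_antisymm
  · rintro _ ⟨h, rfl⟩
    rw [LinearMap.mem_ker, dualMapRight_apply', dualMapRight_apply', LinearMap.comp_assoc,
      R.dd n, LinearMap.comp_zero]
  · intro g hg
    have hg' : g ∘ₗ R.d (n+1) = 0 := hg
    have h1 : (g ∘ₗ cmap S R (n+1)) ∈ LinearMap.ker (dualMapRight A (S.d (n+1))) := by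
      rw [LinearMap.mem_ker, dualMapRight_apply', LinearMap.comp_assoc, ← cmap_chain S R (n+1),
        ← LinearMap.comp_assoc, hg', LinearMap.zero_comp]
    rw [← hS n] at h1
    obtain ⟨h, hh⟩ := h1
    rw [dualMapRight_apply'] at hh
    refine ⟨h ∘ₗ cmap R S n - g ∘ₗ hmap R S n, ?_⟩
    rw [dualMapRight_apply', LinearMap.sub_comp, LinearMap.comp_assoc, LinearMap.comp_assoc,
      ← cmap_chain R S n, ← LinearMap.comp_assoc (cmap R S (n+1)) (S.d n) h, hh]
    -- now : (g ∘ₗ cmap S R (n+1)) ∘ₗ cmap R S (n+1) - g ∘ₗ (hmap R S n ∘ₗ R.d n) = g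
    have e := congrArg (fun t => g ∘ₗ t) (hmap_rel R S n)
    rw [← LinearMap.comp_assoc, hg', LinearMap.zero_comp, LinearMap.comp_sub,
      LinearMap.comp_sub, LinearMap.comp_id] at e
    -- e : 0 = g ∘ₗ (cmap S R (n+1) ∘ₗ cmap R S (n+1)) - g - g ∘ₗ (hmap R S n ∘ₗ R.d n)
    rw [LinearMap.comp_assoc]
    have : g ∘ₗ (cmap S R (n+1) ∘ₗ cmap R S (n+1)) =
        (g ∘ₗ cmap S R (n+1)) ∘ₗ cmap R S (n+1) := (LinearMap.comp_assoc _ _ _).symm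
    rw [this] at e
    have e2 : (g ∘ₗ cmap S R (n+1)) ∘ₗ cmap R S (n+1) = g + g ∘ₗ (hmap R S n ∘ₗ R.d n) := by
      have e3 := e.symm
      rw [sub_sub, sub_eq_zero] at e3
      exact e3
    rw [this, e2, add_sub_cancel_right]

end MyAux3
section MyAux4
open LinearMap

variable {A : Type u} [Ring A]

theorem jac_smul_mem {N : Type u} [AddCommGroup N] [Module A N] (m : Submodule A N)
    (hm : IsCoatom m) {a : A} (ha : a ∈ (⊥ : Ideal A).jacobson) (p : N) : a • p ∈ m := by
  haveI : IsSimpleModule A (N ⧸ m) := (isSimpleModule_iff_isCoatom).mpr hm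
  have hq : ∀ s : N ⧸ m, a • s = 0 := by
    intro s
    by_cases hs : s = 0
    · rw [hs, smul_zero]
    · have hsurj := ((isSimpleModule_iff_toSpanSingleton_surjective).mp ‹_›).2 s hs
      have hker : IsCoatom (LinearMap.ker (LinearMap.toSpanSingleton A (N ⧸ m) s)) := by
        have equiv := LinearMap.quotKerEquivOfSurjective _ hsurj
        haveI : IsSimpleModule A (A ⧸ LinearMap.ker (LinearMap.toSpanSingleton A (N ⧸ m) s)) :=
          IsSimpleModule.congr equiv
        exact (isSimpleModule_iff_isCoatom).mp ‹_›
      have hmax : Ideal.IsMaximal (LinearMap.ker (LinearMap.toSpanSingleton A (N ⧸ m) s)) :=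
        Ideal.isMaximal_def.mpr hker
      have hmem : a ∈ LinearMap.ker (LinearMap.toSpanSingleton A (N ⧸ m) s) :=
        Submodule.mem_sInf.mp ha _ ⟨bot_le, hmax⟩
      simpa [LinearMap.toSpanSingleton] using LinearMap.mem_ker.mp hmem
  have : Submodule.Quotient.mk (a • p) = (0 : N ⧸ m) := by
    rw [Submodule.Quotient.mk_smul]
    exact hq _
  exact (Submodule.Quotient.mk_eq_zero m).mp this

theorem myNakayama {N : Type u} [AddCommGroup N] [Module A N] [Module.Finite A N]
    (h : ∀ x : N, x ∈ radSMul A N) : Subsingleton N := by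
  by_contra hs
  haveI : Nontrivial N := not_subsingleton_iff_nontrivial.mp hs
  haveI hco : IsCoatomic (Submodule A N) :=
    CompleteLattice.coatomic_of_top_compact
      ((Submodule.fg_iff_compact _).mp (Module.finite_def.mp ‹_›))
  rcases hco.eq_top_or_exists_le_coatom (⊥ : Submodule A N) with hbot | ⟨m, hm, -⟩
  · exact absurd hbot bot_ne_top
  · have hle : radSMul A N ≤ m := by
      rw [radSMul]
      apply Submodule.span_le.mpr
      rintro x ⟨a, ha, p, rfl⟩
      exact jac_smul_mem m hm ha p
    have : m = ⊤ := by
      apply eq_top_iff.mpr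
      intro x _
      exact hle (h x)
    exact absurd this hm.1

end MyAux4
section MyAux5
open LinearMap

variable {A : Type u} [Ring A]

theorem radSMul_map {X Y : Type u} [AddCommGroup X] [Module A X] [AddCommGroup Y] [Module A Y]
    (h : X →ₗ[A] Y) {x : X} (hx : x ∈ radSMul A X) : h x ∈ radSMul A Y := by
  induction hx using Submodule.span_induction with
  | mem z hz =>
    obtain ⟨a, ha, p, rfl⟩ := hz
    rw [map_smul]
    exact Submodule.subset_span ⟨a, ha, h p, rfl⟩
  | zero => rw [map_zero]; exact Submodule.zero_mem _
  | add y z _ _ hy hz => rw [map_add]; exact Submodule.add_mem _ hy hz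
  | smul a y _ hy => rw [map_smul]; exact Submodule.smul_mem _ a hy

theorem radA_smul_mem {X : Type u} [AddCommGroup X] [Module A X] {b : A}
    (hb : b ∈ radSMul A A) (x : X) : b • x ∈ radSMul A X := by
  induction hb using Submodule.span_induction with
  | mem z hz =>
    obtain ⟨a, ha, c, rfl⟩ := hz
    rw [smul_eq_mul, mul_smul]
    exact Submodule.subset_span ⟨a, ha, c • x, rfl⟩
  | zero => rw [zero_smul]; exact Submodule.zero_mem _
  | add y z _ _ hy hz => rw [add_smul]; exact Submodule.add_mem _ hy hz
  | smul a y _ hy => rw [smul_eq_mul, mul_smul]; exact Submodule.smul_mem _ a hy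

end MyAux5
set_option maxHeartbeats 1600000 in
/-- one direction of the Main Theorem of [RZ6]. Let `P_•` be a minimal
complex of finitely generated projective modules with homology concentrated in degrees
`0, -1` whose `A`-dual complex is acyclic.  Then `M = Coker f₁` is a reduced
bi-semi-Gorenstein-projective module, `M* ≅ Coker f₋₁*` and `M** ≅ Ker f₋₁`.
Here the map `P_{i+1} → P_i` of the complex is `f i`, so that `f₁ = f 0` and
`f₋₁ = f (-2)`. -/
theorem stmt7 (R₀ : Type u) [CommRing R₀] [IsArtinianRing R₀]
    (A : Type u) [Ring A] [Algebra R₀ A] [Module.Finite R₀ A]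
    (P : ℤ → Type u) [∀ i, AddCommGroup (P i)] [∀ i, Module A (P i)]
    (hproj : ∀ i, Module.Projective A (P i)) (hfin : ∀ i, Module.Finite A (P i))
    (f : ∀ i : ℤ, P (i + 1) →ₗ[A] P i)
    -- minimality: the image of each differential lies in `J·P`
    (hmin : ∀ i, LinearMap.range (f i) ≤ radSMul A (P i))
    -- it is a complex
    (hcpx : ∀ i, LinearMap.range (f (i + 1)) ≤ LinearMap.ker (f i))
    -- homology vanishes in all degrees other than `0` and `-1`
    (hH : ∀ i : ℤ, i + 1 ≠ 0 → i + 1 ≠ -1 →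
      LinearMap.range (f (i + 1)) = LinearMap.ker (f i))
    -- the `A`-dual complex is acyclic
    (hdual : ∀ i, LinearMap.range (dualMapRight A (f i)) =
      LinearMap.ker (dualMapRight A (f (i + 1)))) :
    -- `M := Coker f₁`
    (IsSemiGorensteinProj A (P 0 ⧸ LinearMap.range (f 0))) ∧
    (IsSemiGorensteinProj Aᵐᵒᵖ ((P 0 ⧸ LinearMap.range (f 0)) →ₗ[A] A)) ∧
    -- reduced: no nonzero projective direct summand
    (∀ N₁ N₂ : Submodule A (P 0 ⧸ LinearMap.range (f 0)),
      IsCompl N₁ N₂ → Module.Projective A N₁ → N₁ = ⊥) ∧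
    -- `M* ≅ Coker (f₋₁* : P₋₂* → P₋₁*)`
    Nonempty (((P 0 ⧸ LinearMap.range (f 0)) →ₗ[A] A) ≃ₗ[Aᵐᵒᵖ]
      ((P (-2 + 1) →ₗ[A] A) ⧸ LinearMap.range (dualMapRight A (f (-2))))) ∧
    -- `M** ≅ Ker f₋₁`
    Nonempty ((((P 0 ⧸ LinearMap.range (f 0)) →ₗ[A] A) →ₗ[Aᵐᵒᵖ] A) ≃ₗ[A]
      LinearMap.ker (f (-2))) := by
  classical
  -- the positive-side projective resolution of `M`
  let Rpos : ProjRes A (P 0 ⧸ LinearMap.range (f 0)) :=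
  { P := fun n => P (n : ℤ)
    proj := fun n => hproj _
    fin := fun n => hfin _
    d := fun n => f (n : ℤ)
    aug := (LinearMap.range (f 0)).mkQ
    surj := Submodule.mkQ_surjective _
    exact0 := by rw [Submodule.ker_mkQ]; rfl
    exact := fun n => hH (n : ℤ) (by omega) (by omega) }
  have hSGP1 : IsSemiGorensteinProj A (P 0 ⧸ LinearMap.range (f 0)) := by
    intro R n
    exact myTransfer Rpos R (fun k => hdual (k : ℤ)) n
  -- the augmentation of the negative-side (dual) resolution
  have hker0 : ∀ h : P (Int.negSucc 0) →ₗ[A] A,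
      LinearMap.range (f 0) ≤ LinearMap.ker (h ∘ₗ f (Int.negSucc 0)) := by
    intro h x hx
    obtain ⟨y, rfl⟩ := hx
    have h0 : f (Int.negSucc 0) (f 0 y) = 0 :=
      LinearMap.mem_ker.mp (hcpx (Int.negSucc 0) ⟨y, rfl⟩)
    show h (f (Int.negSucc 0) (f 0 y)) = 0
    rw [h0, map_zero]
  let κ : (P (Int.negSucc 0) →ₗ[A] A) →ₗ[Aᵐᵒᵖ] ((P 0 ⧸ LinearMap.range (f 0)) →ₗ[A] A) :=
  { toFun := fun h => (LinearMap.range (f 0)).liftQ (h ∘ₗ f (Int.negSucc 0)) (hker0 h)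
    map_add' := fun h₁ h₂ => by
      refine LinearMap.ext fun q => ?_
      obtain ⟨x, rfl⟩ := Submodule.Quotient.mk_surjective _ q
      rfl
    map_smul' := fun a h => by
      refine LinearMap.ext fun q => ?_
      obtain ⟨x, rfl⟩ := Submodule.Quotient.mk_surjective _ q
      rfl }
  have hspecκ : ∀ h, (κ h) ∘ₗ (LinearMap.range (f 0)).mkQ = h ∘ₗ f (Int.negSucc 0) :=
    fun h => Submodule.liftQ_mkQ _ _ _
  have hκ_zero : ∀ h, h ∘ₗ f (Int.negSucc 0) = 0 → κ h = 0 := by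
    intro h hcomp
    refine LinearMap.ext fun q => ?_
    obtain ⟨x, rfl⟩ := Submodule.Quotient.mk_surjective _ q
    show (h ∘ₗ f (Int.negSucc 0)) x = 0
    rw [hcomp]
    rfl
  have hκ_ker : LinearMap.ker κ = LinearMap.ker (dualMapRight A (f (Int.negSucc 0))) := by
    apply le_antisymm
    · intro h hh
      rw [LinearMap.mem_ker] at hh ⊢
      show h ∘ₗ f (Int.negSucc 0) = 0
      have h2 := hspecκ h
      rw [hh, LinearMap.zero_comp] at h2
      exact h2.symm
    · intro h hh
      rw [LinearMap.mem_ker] at hh ⊢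
      exact hκ_zero h hh
  have hex5 : ∀ g : ((P 0 ⧸ LinearMap.range (f 0)) →ₗ[A] A),
      ∃ h, dualMapRight A (f (Int.negSucc 0)) h = g ∘ₗ (LinearMap.range (f 0)).mkQ := by
    intro g
    have h1 : ((g ∘ₗ (LinearMap.range (f 0)).mkQ : P (Int.negSucc 0 + 1) →ₗ[A] A)) ∈
        LinearMap.ker (dualMapRight A (f (Int.negSucc 0 + 1))) := by
      rw [LinearMap.mem_ker]
      show (g ∘ₗ (LinearMap.range (f 0)).mkQ) ∘ₗ f (Int.negSucc 0 + 1) = 0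
      refine LinearMap.ext fun x => ?_
      show g ((LinearMap.range (f 0)).mkQ (f (Int.negSucc 0 + 1) x)) = 0
      have h2 : (LinearMap.range (f 0)).mkQ (f (Int.negSucc 0 + 1) x) = 0 :=
        (Submodule.Quotient.mk_eq_zero _).mpr ⟨x, rfl⟩
      rw [h2, map_zero]
    exact (hdual (Int.negSucc 0)).ge h1
  have hκ_surj : Function.Surjective κ := by
    intro g
    obtain ⟨h, hh⟩ := hex5 g
    refine ⟨h, ?_⟩
    refine LinearMap.ext fun q => ?_
    obtain ⟨x, rfl⟩ := Submodule.Quotient.mk_surjective _ q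
    show (dualMapRight A (f (Int.negSucc 0)) h) x = g (Submodule.Quotient.mk x)
    rw [hh]
    rfl
  -- the negative-side resolution of the dual module
  let Rneg : ProjRes Aᵐᵒᵖ ((P 0 ⧸ LinearMap.range (f 0)) →ₗ[A] A) :=
  { P := fun n => (P (Int.negSucc n) →ₗ[A] A)
    proj := fun n => by haveI := hfin (Int.negSucc n); exact myDualProjective _ (hproj _)
    fin := fun n => by haveI := hfin (Int.negSucc n); exact myDualFinite _ (hproj _)
    d := fun n => dualMapRight A (f (Int.negSucc (n+1)))
    aug := κ
    surj := hκ_surj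
    exact0 := by
      rw [hκ_ker]
      exact hdual (Int.negSucc 1)
    exact := fun n => hdual (Int.negSucc (n+2)) }
  have hSdual : ∀ n, LinearMap.range (dualMapRight Aᵐᵒᵖ (Rneg.d n)) =
      LinearMap.ker (dualMapRight Aᵐᵒᵖ (Rneg.d (n+1))) := by
    intro n
    apply le_antisymm
    · rintro _ ⟨Φ, rfl⟩
      rw [LinearMap.mem_ker]
      refine LinearMap.ext fun g => ?_
      have hz : (g ∘ₗ f (Int.negSucc (n+2))) ∘ₗ f (Int.negSucc (n+1)) = 0 := by
        refine LinearMap.ext fun z => ?_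
        show g (f (Int.negSucc (n+2)) (f (Int.negSucc (n+1)) z)) = 0
        have hm : f (Int.negSucc (n+1)) z ∈ LinearMap.ker (f (Int.negSucc (n+2))) :=
          hcpx (Int.negSucc (n+2)) ⟨z, rfl⟩
        exact (congrArg g (LinearMap.mem_ker.mp hm)).trans (map_zero g)
      show Φ ((g ∘ₗ f (Int.negSucc (n+2))) ∘ₗ f (Int.negSucc (n+1))) = 0
      rw [hz, map_zero]
    · intro Ψ hΨ
      haveI := hfin (Int.negSucc (n+1))
      obtain ⟨x, hx⟩ := myEvalSurjOp _ (hproj (Int.negSucc (n+1))) Ψ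
      have hker : f (Int.negSucc (n+2)) x = 0 := by
        haveI := hfin (Int.negSucc (n+2))
        apply myEvalInj _ (hproj (Int.negSucc (n+2)))
        intro g
        have h0 : Ψ (g ∘ₗ f (Int.negSucc (n+2))) = 0 :=
          DFunLike.congr_fun (LinearMap.mem_ker.mp hΨ) g
        have h2 : Ψ (g ∘ₗ f (Int.negSucc (n+2))) =
            MulOpposite.op (g (f (Int.negSucc (n+2)) x)) := hx _
        rw [h0] at h2
        have h3 := congrArg MulOpposite.unop h2.symm
        simpa using h3
      have hx' : x ∈ LinearMap.range (f (Int.negSucc (n+1))) :=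
        (hH (Int.negSucc (n+2)) (by rw [Int.negSucc_eq]; omega)
          (by rw [Int.negSucc_eq]; omega)).ge (LinearMap.mem_ker.mpr hker)
      obtain ⟨y, hy⟩ := hx'
      refine ⟨opEval y, ?_⟩
      refine LinearMap.ext fun g => ?_
      show MulOpposite.op ((g ∘ₗ f (Int.negSucc (n+1))) y) = Ψ g
      rw [hx g]
      exact congrArg (fun t => MulOpposite.op (g t)) hy
  have hSGP2 : IsSemiGorensteinProj Aᵐᵒᵖ ((P 0 ⧸ LinearMap.range (f 0)) →ₗ[A] A) :=
    fun R n => myTransfer Rneg R hSdual n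
  refine ⟨hSGP1, hSGP2, ?_, ?_, ?_⟩
  · -- reducedness
    intro N₁ N₂ hc hN₁
    let π := (LinearMap.range (f 0)).mkQ
    let q1 : (P 0 ⧸ LinearMap.range (f 0)) →ₗ[A] ↥N₁ := N₁.linearProjOfIsCompl N₂ hc
    have hq1s : Function.Surjective (q1 ∘ₗ π) := by
      intro y
      obtain ⟨x, hxeq⟩ := Submodule.mkQ_surjective _ (↑y : P 0 ⧸ LinearMap.range (f 0))
      refine ⟨x, ?_⟩
      show q1 (π x) = y
      rw [show π x = ↑y from hxeq]
      exact Submodule.linearProjOfIsCompl_apply_left hc y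
    haveI := hN₁
    obtain ⟨σ, hσ⟩ := Module.projective_lifting_property (q1 ∘ₗ π) LinearMap.id hq1s
    have hσ' : ∀ y : ↥N₁, q1 (π (σ y)) = y := fun y => DFunLike.congr_fun hσ y
    set e : P 0 →ₗ[A] P 0 := σ ∘ₗ (q1 ∘ₗ π) with he
    have hfact : ∀ η : P 0 →ₗ[A] A, ∃ h, dualMapRight A (f (Int.negSucc 0)) h = η ∘ₗ e := by
      intro η
      have h1 : ((η ∘ₗ e : P (Int.negSucc 0 + 1) →ₗ[A] A)) ∈ LinearMap.ker (dualMapRight A (f (Int.negSucc 0 + 1))) := by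
        rw [LinearMap.mem_ker]
        show (η ∘ₗ e) ∘ₗ f (Int.negSucc 0 + 1) = 0
        refine LinearMap.ext fun x => ?_
        show η (σ (q1 (π (f (Int.negSucc 0 + 1) x)))) = 0
        have h2 : π (f (Int.negSucc 0 + 1) x) = 0 :=
          (Submodule.Quotient.mk_eq_zero _).mpr ⟨x, rfl⟩
        rw [h2, map_zero, map_zero, map_zero]
      exact (hdual (Int.negSucc 0)).ge h1
    haveI := hfin (0 : ℤ)
    obtain ⟨k, xx, φ, hd⟩ := myDualBasis (P (0 : ℤ)) (hproj 0)
    have hrad : ∀ z : P (0 : ℤ), e z ∈ radSMul A (P (0 : ℤ)) := by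
      intro z
      rw [hd (e z)]
      refine Submodule.sum_mem _ fun j _ => ?_
      obtain ⟨h, hh⟩ := hfact (φ j)
      have hval : φ j (e z) = h (f (Int.negSucc 0) z) := (DFunLike.congr_fun hh z).symm
      rw [hval]
      exact radA_smul_mem (radSMul_map h (hmin (Int.negSucc 0) ⟨z, rfl⟩)) _
    have hallrad : ∀ y : ↥N₁, y ∈ radSMul A ↥N₁ := by
      intro y
      have h1 : y = (q1 ∘ₗ π) (e (σ y)) := by
        show y = q1 (π (σ (q1 (π (σ y)))))
        rw [hσ' y]
        exact (hσ' y).symm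
      rw [h1]
      exact radSMul_map (q1 ∘ₗ π) (hrad (σ y))
    haveI : Module.Finite A ↥N₁ := Module.Finite.of_surjective (q1 ∘ₗ π) hq1s
    haveI hsub : Subsingleton ↥N₁ := myNakayama hallrad
    exact Submodule.eq_bot_of_subsingleton
  · -- M* ≅ Coker f₋₁*
    have hκ_ker_range : LinearMap.ker κ = LinearMap.range (dualMapRight A (f (-2))) := by
      rw [hκ_ker]
      exact (hdual (Int.negSucc 1)).symm
    have hle4 : LinearMap.range (dualMapRight A (f (-2))) ≤ LinearMap.ker κ :=
      le_of_eq hκ_ker_range.symm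
    let χ := (LinearMap.range (dualMapRight A (f (-2)))).liftQ κ hle4
    have hχinj : Function.Injective χ := by
      rw [← LinearMap.ker_eq_bot]
      rw [Submodule.ker_liftQ_eq_bot]
      exact le_of_eq hκ_ker_range
    have hχsurj : Function.Surjective χ := by
      intro g
      obtain ⟨h, hh⟩ := hκ_surj g
      exact ⟨Submodule.Quotient.mk h, hh⟩
    exact ⟨(LinearEquiv.ofBijective χ ⟨hχinj, hχsurj⟩).symm⟩
  · -- M** ≅ Ker f₋₁
    let sel : ((P 0 ⧸ LinearMap.range (f 0)) →ₗ[A] A) → (P (Int.negSucc 0) →ₗ[A] A) :=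
      fun g => Classical.choose (hex5 g)
    have hsel : ∀ g, (sel g) ∘ₗ f (Int.negSucc 0) = g ∘ₗ (LinearMap.range (f 0)).mkQ :=
      fun g => Classical.choose_spec (hex5 g)
    have wd : ∀ (h h' : P (Int.negSucc 0) →ₗ[A] A),
        h ∘ₗ f (Int.negSucc 0) = h' ∘ₗ f (Int.negSucc 0) →
        ∀ x : P (Int.negSucc 1 + 1), f (Int.negSucc 1) x = 0 → h x = h' x := by
      intro h h' heq x hx
      have h1 : (h - h') ∈ LinearMap.ker (dualMapRight A (f (Int.negSucc 0))) := by
        rw [LinearMap.mem_ker]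
        show (h - h') ∘ₗ f (Int.negSucc 0) = 0
        rw [LinearMap.sub_comp, heq, sub_self]
      have h2 : (h - h') ∈ LinearMap.range (dualMapRight A (f (Int.negSucc 1))) :=
        (hdual (Int.negSucc 1)).ge h1
      obtain ⟨k2, hk2⟩ := h2
      have h4 : k2 (f (Int.negSucc 1) x) = h x - h' x := DFunLike.congr_fun hk2 x
      rw [hx, map_zero] at h4
      exact sub_eq_zero.mp h4.symm
    have wd' : ∀ (g : ((P 0 ⧸ LinearMap.range (f 0)) →ₗ[A] A))
        (h' : P (Int.negSucc 0) →ₗ[A] A),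
        h' ∘ₗ f (Int.negSucc 0) = g ∘ₗ (LinearMap.range (f 0)).mkQ →
        ∀ x : P (Int.negSucc 1 + 1), f (Int.negSucc 1) x = 0 → sel g x = h' x :=
      fun g h' hcomp x hx => wd _ _ ((hsel g).trans hcomp.symm) x hx
    let Θ : ↥(LinearMap.ker (f (-2))) →ₗ[A]
        (((P 0 ⧸ LinearMap.range (f 0)) →ₗ[A] A) →ₗ[Aᵐᵒᵖ] A) :=
    { toFun := fun x =>
      { toFun := fun g => sel g x.1
        map_add' := fun g₁ g₂ => by
          have hcomp : (sel g₁ + sel g₂) ∘ₗ f (Int.negSucc 0) =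
              (g₁ + g₂) ∘ₗ (LinearMap.range (f 0)).mkQ := by
            rw [LinearMap.add_comp, hsel g₁, hsel g₂, LinearMap.add_comp]
          exact wd' (g₁ + g₂) _ hcomp x.1 (LinearMap.mem_ker.mp x.2)
        map_smul' := fun a g => by
          have hcomp : (a • sel g) ∘ₗ f (Int.negSucc 0) =
              (a • g) ∘ₗ (LinearMap.range (f 0)).mkQ := by
            rw [LinearMap.smul_comp, hsel g, LinearMap.smul_comp]
          exact wd' (a • g) _ hcomp x.1 (LinearMap.mem_ker.mp x.2) }
      map_add' := fun x y => by
        refine LinearMap.ext fun g => ?_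
        show sel g (x.1 + y.1) = sel g x.1 + sel g y.1
        rw [map_add]
      map_smul' := fun a x => by
        refine LinearMap.ext fun g => ?_
        show sel g (a • x.1) = a • sel g x.1
        rw [map_smul] }
    have hΘinj : Function.Injective Θ := by
      rw [← LinearMap.ker_eq_bot]
      refine (Submodule.eq_bot_iff _).mpr fun x hx => ?_
      have hx0 : ∀ h : P (Int.negSucc 0) →ₗ[A] A, h x.1 = 0 := by
        intro h
        have h1 : sel (κ h) x.1 = h x.1 :=
          wd' (κ h) h (hspecκ h) x.1 (LinearMap.mem_ker.mp x.2)
        have h2 : sel (κ h) x.1 = 0 := DFunLike.congr_fun (LinearMap.mem_ker.mp hx) (κ h)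
        rw [← h1, h2]
      haveI := hfin (Int.negSucc 0)
      have hz : x.1 = (0 : P (Int.negSucc 0)) := myEvalInj _ (hproj _) _ hx0
      exact Subtype.ext hz
    have hΘsurj : Function.Surjective Θ := by
      intro Φ
      haveI := hfin (Int.negSucc 0)
      obtain ⟨z, hz⟩ := myEvalSurjA _ (hproj (Int.negSucc 0)) (Φ ∘ₗ κ)
      have hzker : f (Int.negSucc 1) z = 0 := by
        haveI := hfin (Int.negSucc 1)
        apply myEvalInj _ (hproj (Int.negSucc 1))
        intro η
        have h1 : κ (η ∘ₗ f (Int.negSucc 1)) = 0 := by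
          apply hκ_zero
          refine LinearMap.ext fun w => ?_
          show η (f (Int.negSucc 1) (f (Int.negSucc 0) w)) = 0
          have hm : f (Int.negSucc 0) w ∈ LinearMap.ker (f (Int.negSucc 1)) :=
            hcpx (Int.negSucc 1) ⟨w, rfl⟩
          exact (congrArg η (LinearMap.mem_ker.mp hm)).trans (map_zero η)
        have h2 : Φ (κ (η ∘ₗ f (Int.negSucc 1))) = η (f (Int.negSucc 1) z) :=
          hz (η ∘ₗ f (Int.negSucc 1))
        rw [h1, map_zero] at h2
        exact h2.symm
      refine ⟨⟨z, LinearMap.mem_ker.mpr hzker⟩, ?_⟩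
      refine LinearMap.ext fun g => ?_
      have hκsel : κ (sel g) = g := by
        refine LinearMap.ext fun q => ?_
        obtain ⟨w, rfl⟩ := Submodule.Quotient.mk_surjective _ q
        show ((sel g) ∘ₗ f (Int.negSucc 0)) w = g (Submodule.Quotient.mk w)
        rw [hsel g]
        rfl
      have h3 : Φ (κ (sel g)) = sel g z := hz (sel g)
      rw [hκsel] at h3
      exact h3.symm
    exact ⟨(LinearEquiv.ofBijective Θ ⟨hΘinj, hΘsurj⟩).symm⟩
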